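/- There exists a unique ℤ-valued additive invariant χ' on the Boolean algebra generated by rational polyhedra in ℚ^n (additive on disjoint unions of constructible sets) that assigns the value 1 to every non-empty polyhedron. -/

import Mathlib

variable {V : Type} [AddCommGroup V] [Module ℚ V]

/-- A (rational) polyhedron in a `ℚ`-vector space: a finite intersection of
closed affine half-spaces. -/
def IsPolyhedron (S : Set V) : Prop :=
  ∃ (m : ℕ) (f : Fin m → (V →ᵃ[ℚ] ℚ)), S = {v | ∀ i, 0 ≤ f i v}

/-- Constructible subsets: the Boolean algebra generated by polyhedra. -/
inductive IsConstructible : Set V → Prop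
  | poly {S : Set V} : IsPolyhedron S → IsConstructible S
  | compl {S : Set V} : IsConstructible S → IsConstructible Sᶜ
  | union {S T : Set V} : IsConstructible S → IsConstructible T →
      IsConstructible (S ∪ T)

/-- `χ` is a bounded Euler characteristic: a `ℤ`-valued invariant of
constructible sets, additive on disjoint unions, assigning `1` to every
non-empty polyhedron. -/
def IsEulerChar (χ : Set V → ℤ) : Prop :=
  (∀ A B : Set V, IsConstructible A → IsConstructible B → Disjoint A B →
    χ (A ∪ B) = χ A + χ B) ∧
  (∀ S : Set V, IsPolyhedron S → S.Nonempty → χ S = 1)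


noncomputable section

open Classical in
/-- Integer indicator function of a set. -/
def ind {α : Type*} (S : Set α) (x : α) : ℤ := if x ∈ S then 1 else 0

lemma ind_of_mem {α : Type*} {S : Set α} {x : α} (h : x ∈ S) : ind S x = 1 := by
  simp [ind, h]

lemma ind_of_not_mem {α : Type*} {S : Set α} {x : α} (h : x ∉ S) : ind S x = 0 := by
  simp [ind, h]

/-- `f` is eventually equal to `c` just to the right of `x`. -/
def RightConst (f : ℚ → ℤ) (x : ℚ) (c : ℤ) : Prop :=
  ∃ y, x < y ∧ ∀ z, x < z → z < y → f z = c

lemma rightConst_unique {f : ℚ → ℤ} {x : ℚ} {c c' : ℤ}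
    (h : RightConst f x c) (h' : RightConst f x c') : c = c' := by
  obtain ⟨y, hy, hc⟩ := h
  obtain ⟨y', hy', hc'⟩ := h'
  obtain ⟨z, hz1, hz2⟩ := exists_between (lt_min hy hy')
  rw [← hc z hz1 (lt_of_lt_of_le hz2 (min_le_left _ _)),
    ← hc' z hz1 (lt_of_lt_of_le hz2 (min_le_right _ _))]

lemma RightConst.add {f g : ℚ → ℤ} {x : ℚ} {c c' : ℤ} (h : RightConst f x c)
    (h' : RightConst g x c') : RightConst (fun z => f z + g z) x (c + c') := by
  obtain ⟨y, hy, hc⟩ := h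
  obtain ⟨y', hy', hc'⟩ := h'
  refine ⟨min y y', lt_min hy hy', fun z hz1 hz2 => ?_⟩
  show f z + g z = c + c'
  rw [hc z hz1 (lt_of_lt_of_le hz2 (min_le_left _ _)),
    hc' z hz1 (lt_of_lt_of_le hz2 (min_le_right _ _))]

lemma RightConst.intmul {f : ℚ → ℤ} {x : ℚ} {c : ℤ} (d : ℤ) (h : RightConst f x c) :
    RightConst (fun z => d * f z) x (d * c) := by
  obtain ⟨y, hy, hc⟩ := h
  refine ⟨y, hy, fun z hz1 hz2 => ?_⟩
  show d * f z = d * c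
  rw [hc z hz1 hz2]

open Classical in
/-- The right limit of `f` at `x` (junk value `0` if none exists). -/
def fplus (f : ℚ → ℤ) (x : ℚ) : ℤ :=
  if h : ∃ c, RightConst f x c then h.choose else 0

lemma fplus_eq {f : ℚ → ℤ} {x : ℚ} {c : ℤ} (h : RightConst f x c) : fplus f x = c := by
  have he : ∃ c, RightConst f x c := ⟨c, h⟩
  rw [fplus, dif_pos he]
  exact rightConst_unique he.choose_spec h

open Classical in
/-- The limit of `f` at `+∞` (junk value `0` if none exists). -/
def atTop' (f : ℚ → ℤ) : ℤ :=
  if h : ∃ c, ∃ M : ℚ, ∀ z, M < z → f z = c then h.choose else 0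

lemma atTop'_eq {f : ℚ → ℤ} {c : ℤ} {M : ℚ} (h : ∀ z, M < z → f z = c) : atTop' f = c := by
  have he : ∃ c, ∃ M : ℚ, ∀ z, M < z → f z = c := ⟨c, M, h⟩
  rw [atTop', dif_pos he]
  obtain ⟨M', hM'⟩ := he.choose_spec
  have hz : max M M' < max M M' + 1 := by linarith
  rw [← hM' _ (lt_of_le_of_lt (le_max_right M M') hz), h _ (lt_of_le_of_lt (le_max_left M M') hz)]

def TSupp (f : ℚ → ℤ) : Set ℚ := {x | f x ≠ fplus f x}

/-- A tame function: right limits everywhere, eventually constant at `+∞`,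
and finitely many right-jumps. -/
def Tame (f : ℚ → ℤ) : Prop :=
  (∀ x, ∃ c, RightConst f x c) ∧ (∃ c, ∃ M : ℚ, ∀ z, M < z → f z = c) ∧ (TSupp f).Finite

open Classical in
/-- The 1-dimensional Euler integral. -/
def T (f : ℚ → ℤ) : ℤ :=
  if h : Tame f then atTop' f + h.2.2.toFinset.sum (fun x => f x - fplus f x) else 0

lemma T_eq_sum {f : ℚ → ℤ} (h : Tame f) (s : Finset ℚ) (hs : TSupp f ⊆ s) :
    T f = atTop' f + s.sum (fun x => f x - fplus f x) := by
  rw [T, dif_pos h]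
  congr 1
  apply Finset.sum_subset
  · intro x hx
    exact hs (by simpa using hx)
  · intro x _ hx
    have : f x = fplus f x := by
      by_contra hne
      exact hx (by simpa [TSupp] using hne)
    simp [this]

lemma fplus_add {f g : ℚ → ℤ} {x : ℚ} (hf : ∃ c, RightConst f x c)
    (hg : ∃ c, RightConst g x c) :
    fplus (fun z => f z + g z) x = fplus f x + fplus g x := by
  obtain ⟨c, hcf⟩ := hf
  obtain ⟨c', hcg⟩ := hg
  rw [fplus_eq (hcf.add hcg), fplus_eq hcf, fplus_eq hcg]

lemma Tame.add {f g : ℚ → ℤ} (hf : Tame f) (hg : Tame g) : Tame (fun x => f x + g x) := by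
  obtain ⟨hf1, ⟨cf, Mf, hf2⟩, hf3⟩ := hf
  obtain ⟨hg1, ⟨cg, Mg, hg2⟩, hg3⟩ := hg
  refine ⟨fun x => ?_, ⟨cf + cg, max Mf Mg, fun z hz => ?_⟩, ?_⟩
  · obtain ⟨c, hc⟩ := hf1 x
    obtain ⟨c', hc'⟩ := hg1 x
    exact ⟨c + c', hc.add hc'⟩
  · show f z + g z = cf + cg
    rw [hf2 z (lt_of_le_of_lt (le_max_left _ _) hz), hg2 z (lt_of_le_of_lt (le_max_right _ _) hz)]
  · apply Set.Finite.subset (hf3.union hg3)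
    intro x hx
    by_contra hnx
    simp only [Set.mem_union, TSupp, Set.mem_setOf_eq, not_or, not_not] at hnx
    apply hx
    simp only [TSupp, Set.mem_setOf_eq, not_not]
    rw [fplus_add (hf1 x) (hg1 x), ← hnx.1, ← hnx.2]

lemma T_add {f g : ℚ → ℤ} (hf : Tame f) (hg : Tame g) :
    T (fun x => f x + g x) = T f + T g := by
  classical
  obtain ⟨c, M, hc⟩ := hf.2.1
  obtain ⟨c', M', hc'⟩ := hg.2.1
  have hfg := hf.add hg
  set s : Finset ℚ := hf.2.2.toFinset ∪ hg.2.2.toFinset with hs_def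
  have hfs : TSupp f ⊆ s := by
    intro x hx
    simp only [hs_def, Finset.coe_union, Set.Finite.coe_toFinset, Set.mem_union]
    exact Or.inl hx
  have hgs : TSupp g ⊆ s := by
    intro x hx
    simp only [hs_def, Finset.coe_union, Set.Finite.coe_toFinset, Set.mem_union]
    exact Or.inr hx
  have hsub : TSupp (fun x => f x + g x) ⊆ s := by
    intro x hx
    by_contra hnx
    apply hx
    have h1 : x ∉ TSupp f := fun h => hnx (hfs h)
    have h2 : x ∉ TSupp g := fun h => hnx (hgs h)
    simp only [TSupp, Set.mem_setOf_eq, not_not] at h1 h2 ⊢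
    rw [fplus_add (hf.1 x) (hg.1 x), ← h1, ← h2]
  rw [T_eq_sum hfg s hsub, T_eq_sum hf s hfs, T_eq_sum hg s hgs]
  have hat : atTop' (fun x => f x + g x) = atTop' f + atTop' g := by
    rw [atTop'_eq hc, atTop'_eq hc']
    exact atTop'_eq (M := max M M') (c := c + c') (fun z hz => by
      show f z + g z = c + c'
      rw [hc z (lt_of_le_of_lt (le_max_left _ _) hz),
        hc' z (lt_of_le_of_lt (le_max_right _ _) hz)])
  rw [hat]
  have hterm : ∀ x ∈ s,
      f x + g x - fplus (fun x => f x + g x) x = (f x - fplus f x) + (g x - fplus g x) := by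
    intro x _
    rw [fplus_add (hf.1 x) (hg.1 x)]
    ring
  rw [Finset.sum_congr rfl hterm, Finset.sum_add_distrib]
  ring

lemma tame_const (c : ℤ) : Tame (fun _ => c) := by
  refine ⟨fun x => ⟨c, x + 1, by linarith, fun _ _ _ => rfl⟩, ⟨c, 0, fun _ _ => rfl⟩, ?_⟩
  apply Set.Finite.subset Set.finite_empty
  intro x hx
  exact absurd (fplus_eq (f := fun _ => c) (c := c)
    ⟨x + 1, by linarith, fun _ _ _ => rfl⟩).symm hx

lemma T_const (c : ℤ) : T (fun _ => c) = c := by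
  rw [T_eq_sum (tame_const c) ∅ (by
    intro x hx
    exact absurd (fplus_eq (f := fun _ => c) (c := c)
      ⟨x + 1, by linarith, fun _ _ _ => rfl⟩).symm hx)]
  rw [atTop'_eq (M := 0) (c := c) (fun _ _ => rfl)]
  simp

lemma Tame.intmul {f : ℚ → ℤ} (hf : Tame f) (c : ℤ) : Tame (fun x => c * f x) := by
  obtain ⟨hf1, ⟨cf, Mf, hf2⟩, hf3⟩ := hf
  refine ⟨fun x => ?_, ⟨c * cf, Mf, fun z hz => ?_⟩, ?_⟩
  · obtain ⟨d, hd⟩ := hf1 x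
    exact ⟨c * d, hd.intmul c⟩
  · show c * f z = c * cf
    rw [hf2 z hz]
  · apply hf3.subset
    intro x hx
    by_contra hnx
    simp only [TSupp, Set.mem_setOf_eq, not_not] at hnx
    apply hx
    obtain ⟨d, hd⟩ := hf1 x
    simp only [TSupp, Set.mem_setOf_eq, not_not]
    rw [fplus_eq (hd.intmul c), hnx, fplus_eq hd]

lemma T_intmul {f : ℚ → ℤ} (hf : Tame f) (c : ℤ) : T (fun x => c * f x) = c * T f := by
  obtain ⟨cf, Mf, hf2⟩ := hf.2.1
  have hcf := hf.intmul c
  have hsub : TSupp (fun x => c * f x) ⊆ hf.2.2.toFinset := by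
    intro x hx
    by_contra hnx
    simp only [Finset.coe_sort_coe, Set.Finite.coe_toFinset] at hnx
    have hnx' : f x = fplus f x := by
      by_contra h
      exact hnx h
    apply hx
    obtain ⟨d, hd⟩ := hf.1 x
    simp only [TSupp, Set.mem_setOf_eq, not_not]
    rw [fplus_eq (hd.intmul c), hnx', fplus_eq hd]
  rw [T_eq_sum hcf _ hsub, T_eq_sum hf hf.2.2.toFinset (by simp)]
  have hat : atTop' (fun x => c * f x) = c * atTop' f := by
    rw [atTop'_eq hf2]
    exact atTop'_eq (M := Mf) (c := c * cf) (fun z hz => by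
      show c * f z = c * cf
      rw [hf2 z hz])
  rw [hat]
  have hterm : ∀ x ∈ hf.2.2.toFinset,
      c * f x - fplus (fun x => c * f x) x = c * (f x - fplus f x) := by
    intro x _
    obtain ⟨d, hd⟩ := hf.1 x
    rw [fplus_eq (hd.intmul c), fplus_eq hd]
    ring
  rw [Finset.sum_congr rfl hterm, ← Finset.mul_sum]
  ring

section intervals

lemma tame_T_of_const {I : Set ℚ} (c : ℤ) (h : ∀ t, ind I t = c) :
    Tame (fun t => ind I t) ∧ T (fun t => ind I t) = c := by
  have he : (fun t => ind I t) = fun _ => c := funext h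
  rw [he]
  exact ⟨tame_const c, T_const c⟩

lemma tame_T_empty : Tame (fun t => ind (∅ : Set ℚ) t) ∧ T (fun t => ind (∅ : Set ℚ) t) = 0 :=
  tame_T_of_const 0 (fun t => ind_of_not_mem (by simp))

lemma tame_T_univ : Tame (fun t => ind (Set.univ : Set ℚ) t) ∧
    T (fun t => ind (Set.univ : Set ℚ) t) = 1 :=
  tame_T_of_const 1 (fun t => ind_of_mem (by simp))

lemma rc_Ici (a x : ℚ) : RightConst (fun t => ind (Set.Ici a) t) x (if a ≤ x then 1 else 0) := by
  by_cases h : a ≤ x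
  · rw [if_pos h]
    exact ⟨x + 1, by linarith, fun z h1 _ => ind_of_mem (le_trans h (le_of_lt h1))⟩
  · rw [if_neg h]
    exact ⟨a, lt_of_not_ge h, fun z _ h2 => ind_of_not_mem (by simpa using h2)⟩

lemma tame_T_Ici (a : ℚ) : Tame (fun t => ind (Set.Ici a) t) ∧
    T (fun t => ind (Set.Ici a) t) = 1 := by
  have hsupp : TSupp (fun t => ind (Set.Ici a) t) ⊆ (∅ : Finset ℚ) := by
    intro x hx
    exfalso
    apply hx
    rw [fplus_eq (rc_Ici a x)]
    by_cases h : a ≤ x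
    · rw [if_pos h]; exact ind_of_mem h
    · rw [if_neg h]; exact ind_of_not_mem h
  have ht : Tame (fun t => ind (Set.Ici a) t) := by
    refine ⟨fun x => ⟨_, rc_Ici a x⟩, ⟨1, a, fun z hz => ind_of_mem (le_of_lt hz)⟩, ?_⟩
    exact Set.Finite.subset (Finset.finite_toSet ∅) hsupp
  refine ⟨ht, ?_⟩
  rw [T_eq_sum ht ∅ hsupp,
    atTop'_eq (f := fun t => ind (Set.Ici a) t) (M := a) (c := 1)
      (fun z hz => ind_of_mem (le_of_lt hz))]
  simp

lemma rc_Iic (b x : ℚ) : RightConst (fun t => ind (Set.Iic b) t) x (if x < b then 1 else 0) := by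
  by_cases h : x < b
  · rw [if_pos h]
    exact ⟨b, h, fun z _ h2 => ind_of_mem (le_of_lt h2)⟩
  · rw [if_neg h]
    refine ⟨x + 1, by linarith, fun z h1 _ => ind_of_not_mem ?_⟩
    simp only [Set.mem_Iic, not_le]
    exact lt_of_le_of_lt (le_of_not_gt h) h1

lemma tame_T_Iic (b : ℚ) : Tame (fun t => ind (Set.Iic b) t) ∧
    T (fun t => ind (Set.Iic b) t) = 1 := by
  have hsupp : TSupp (fun t => ind (Set.Iic b) t) ⊆ ({b} : Finset ℚ) := by
    intro x hx
    simp only [Finset.coe_singleton, Set.mem_singleton_iff]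
    by_contra hne
    apply hx
    rw [fplus_eq (rc_Iic b x)]
    by_cases h : x < b
    · rw [if_pos h]; exact ind_of_mem (le_of_lt h)
    · rw [if_neg h]
      exact ind_of_not_mem (by
        simp only [Set.mem_Iic, not_le]
        exact lt_of_le_of_ne (le_of_not_gt h) (Ne.symm hne))
  have hat : ∀ z, b < z → ind (Set.Iic b) z = 0 :=
    fun z hz => ind_of_not_mem (by simpa using hz)
  have ht : Tame (fun t => ind (Set.Iic b) t) := by
    refine ⟨fun x => ⟨_, rc_Iic b x⟩, ⟨0, b, hat⟩, ?_⟩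
    exact Set.Finite.subset (Finset.finite_toSet {b}) hsupp
  refine ⟨ht, ?_⟩
  rw [T_eq_sum ht {b} hsupp, atTop'_eq hat, Finset.sum_singleton, fplus_eq (rc_Iic b b),
    ind_of_mem (S := Set.Iic b) (Set.mem_Iic.mpr (le_refl b))]
  norm_num

lemma rc_Icc (a b x : ℚ) (hab : a ≤ b) :
    RightConst (fun t => ind (Set.Icc a b) t) x (if a ≤ x ∧ x < b then 1 else 0) := by
  by_cases h : a ≤ x ∧ x < b
  · rw [if_pos h]
    exact ⟨b, h.2, fun z h1 h2 => ind_of_mem ⟨le_trans h.1 (le_of_lt h1), le_of_lt h2⟩⟩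
  · rw [if_neg h]
    rcases not_and_or.mp h with h1 | h2
    · refine ⟨a, lt_of_not_ge h1, fun z _ hz => ind_of_not_mem ?_⟩
      simp only [Set.mem_Icc, not_and, not_le]
      intro hza
      exact absurd hza (not_le.mpr hz)
    · refine ⟨x + 1, by linarith, fun z hz _ => ind_of_not_mem ?_⟩
      simp only [Set.mem_Icc, not_and, not_le]
      intro _
      exact lt_of_le_of_lt (le_of_not_gt h2) hz

lemma tame_T_Icc (a b : ℚ) (hab : a ≤ b) : Tame (fun t => ind (Set.Icc a b) t) ∧
    T (fun t => ind (Set.Icc a b) t) = 1 := by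
  have hsupp : TSupp (fun t => ind (Set.Icc a b) t) ⊆ ({b} : Finset ℚ) := by
    intro x hx
    simp only [Finset.coe_singleton, Set.mem_singleton_iff]
    by_contra hne
    apply hx
    rw [fplus_eq (rc_Icc a b x hab)]
    by_cases h : a ≤ x ∧ x < b
    · rw [if_pos h]; exact ind_of_mem ⟨h.1, le_of_lt h.2⟩
    · rw [if_neg h]
      refine ind_of_not_mem ?_
      simp only [Set.mem_Icc, not_and, not_le]
      intro hax
      rcases not_and_or.mp h with h1 | h2
      · exact absurd hax h1
      · exact lt_of_le_of_ne (le_of_not_gt h2) (Ne.symm hne)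
  have hat : ∀ z, b < z → ind (Set.Icc a b) z = 0 :=
    fun z hz => ind_of_not_mem (by
      simp only [Set.mem_Icc, not_and, not_le]
      exact fun _ => hz)
  have ht : Tame (fun t => ind (Set.Icc a b) t) := by
    refine ⟨fun x => ⟨_, rc_Icc a b x hab⟩, ⟨0, b, hat⟩, ?_⟩
    exact Set.Finite.subset (Finset.finite_toSet {b}) hsupp
  refine ⟨ht, ?_⟩
  rw [T_eq_sum ht {b} hsupp, atTop'_eq hat, Finset.sum_singleton, fplus_eq (rc_Icc a b b hab),
    ind_of_mem (S := Set.Icc a b) (Set.mem_Icc.mpr ⟨hab, le_refl b⟩)]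
  rw [if_neg (fun h : a ≤ b ∧ b < b => lt_irrefl b h.2)]
  norm_num

open Classical in
/-- Master lemma: the Euler integral of a "closed interval" indicator is `1`
if the interval is nonempty, `0` otherwise. -/
lemma tame_T_interval {I : Set ℚ}
    (h : I = ∅ ∨ I = Set.univ ∨ (∃ a, I = Set.Ici a) ∨ (∃ b, I = Set.Iic b) ∨
      (∃ a b, a ≤ b ∧ I = Set.Icc a b)) :
    Tame (fun t => ind I t) ∧ T (fun t => ind I t) = if I.Nonempty then 1 else 0 := by
  rcases h with rfl | rfl | ⟨a, rfl⟩ | ⟨b, rfl⟩ | ⟨a, b, hab, rfl⟩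
  · simpa using tame_T_empty
  · simpa [Set.univ_nonempty] using tame_T_univ
  · simpa [Set.nonempty_Ici] using tame_T_Ici a
  · simpa [Set.nonempty_Iic] using tame_T_Iic b
  · simpa [Set.nonempty_Icc.mpr hab] using tame_T_Icc a b hab

section oneVar

variable {m : ℕ} (α β : Fin m → ℚ)

/-- The solution set of finitely many affine inequalities in one variable. -/
def solSet : Set ℚ := {t : ℚ | ∀ i, 0 ≤ α i * t + β i}

lemma solSet_classify :
    solSet α β = ∅ ∨ solSet α β = Set.univ ∨ (∃ a, solSet α β = Set.Ici a) ∨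
      (∃ b, solSet α β = Set.Iic b) ∨ (∃ a b, a ≤ b ∧ solSet α β = Set.Icc a b) := by
  classical
  by_cases hz : ∀ i, α i = 0 → 0 ≤ β i
  · set Apos := Finset.univ.filter (fun i => 0 < α i) with hApos
    set Bneg := Finset.univ.filter (fun i => α i < 0) with hBneg
    by_cases hA : Apos.Nonempty <;> by_cases hB : Bneg.Nonempty
    · -- both bounded: Icc
      set L := (Apos.image (fun i => -β i / α i)).max' (hA.image _) with hL
      set U := (Bneg.image (fun i => -β i / α i)).min' (hB.image _) with hU
      have hIcc : solSet α β = Set.Icc L U := by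
        ext t
        simp only [solSet, Set.mem_setOf_eq, Set.mem_Icc]
        constructor
        · intro ht
          constructor
          · apply Finset.max'_le
            intro y hy
            obtain ⟨i, hi, rfl⟩ := Finset.mem_image.mp hy
            have hipos : 0 < α i := (Finset.mem_filter.mp hi).2
            rw [div_le_iff₀ hipos]
            have := ht i
            linarith
          · apply Finset.le_min'
            intro y hy
            obtain ⟨i, hi, rfl⟩ := Finset.mem_image.mp hy
            have hineg : α i < 0 := (Finset.mem_filter.mp hi).2
            rw [le_div_iff_of_neg hineg]
            have := ht i
            linarith
        · intro ⟨h1, h2⟩ i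
          rcases lt_trichotomy (α i) 0 with h | h | h
          · have hmem : -β i / α i ∈ Bneg.image (fun i => -β i / α i) :=
              Finset.mem_image.mpr ⟨i, Finset.mem_filter.mpr ⟨Finset.mem_univ i, h⟩, rfl⟩
            have := le_trans h2 (Finset.min'_le _ _ hmem)
            rw [le_div_iff_of_neg h] at this
            linarith
          · rw [h]
            simpa using hz i h
          · have hmem : -β i / α i ∈ Apos.image (fun i => -β i / α i) :=
              Finset.mem_image.mpr ⟨i, Finset.mem_filter.mpr ⟨Finset.mem_univ i, h⟩, rfl⟩
            have := le_trans (Finset.le_max' _ _ hmem) h1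
            rw [div_le_iff₀ h] at this
            linarith
      by_cases hLU : L ≤ U
      · exact Or.inr (Or.inr (Or.inr (Or.inr ⟨L, U, hLU, hIcc⟩)))
      · left
        rw [hIcc]
        exact Set.Icc_eq_empty hLU
    · -- only lower bounds: Ici
      set L := (Apos.image (fun i => -β i / α i)).max' (hA.image _) with hL
      refine Or.inr (Or.inr (Or.inl ⟨L, ?_⟩))
      ext t
      simp only [solSet, Set.mem_setOf_eq, Set.mem_Ici]
      constructor
      · intro ht
        apply Finset.max'_le
        intro y hy
        obtain ⟨i, hi, rfl⟩ := Finset.mem_image.mp hy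
        have hipos : 0 < α i := (Finset.mem_filter.mp hi).2
        rw [div_le_iff₀ hipos]
        have := ht i
        linarith
      · intro h1 i
        rcases lt_trichotomy (α i) 0 with h | h | h
        · exact absurd (Finset.mem_filter.mpr ⟨Finset.mem_univ i, h⟩) (fun hm => hB ⟨i, hm⟩)
        · rw [h]
          simpa using hz i h
        · have hmem : -β i / α i ∈ Apos.image (fun i => -β i / α i) :=
            Finset.mem_image.mpr ⟨i, Finset.mem_filter.mpr ⟨Finset.mem_univ i, h⟩, rfl⟩
          have := le_trans (Finset.le_max' _ _ hmem) h1
          rw [div_le_iff₀ h] at this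
          linarith
    · -- only upper bounds: Iic
      set U := (Bneg.image (fun i => -β i / α i)).min' (hB.image _) with hU
      refine Or.inr (Or.inr (Or.inr (Or.inl ⟨U, ?_⟩)))
      ext t
      simp only [solSet, Set.mem_setOf_eq, Set.mem_Iic]
      constructor
      · intro ht
        apply Finset.le_min'
        intro y hy
        obtain ⟨i, hi, rfl⟩ := Finset.mem_image.mp hy
        have hineg : α i < 0 := (Finset.mem_filter.mp hi).2
        rw [le_div_iff_of_neg hineg]
        have := ht i
        linarith
      · intro h2 i
        rcases lt_trichotomy (α i) 0 with h | h | h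
        · have hmem : -β i / α i ∈ Bneg.image (fun i => -β i / α i) :=
            Finset.mem_image.mpr ⟨i, Finset.mem_filter.mpr ⟨Finset.mem_univ i, h⟩, rfl⟩
          have := le_trans h2 (Finset.min'_le _ _ hmem)
          rw [le_div_iff_of_neg h] at this
          linarith
        · rw [h]
          simpa using hz i h
        · exact absurd (Finset.mem_filter.mpr ⟨Finset.mem_univ i, h⟩) (fun hm => hA ⟨i, hm⟩)
    · -- no bounds: univ
      refine Or.inr (Or.inl ?_)
      ext t
      simp only [solSet, Set.mem_setOf_eq, Set.mem_univ, iff_true]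
      intro i
      rcases lt_trichotomy (α i) 0 with h | h | h
      · exact absurd (Finset.mem_filter.mpr ⟨Finset.mem_univ i, h⟩) (fun hm => hB ⟨i, hm⟩)
      · rw [h]
        simpa using hz i h
      · exact absurd (Finset.mem_filter.mpr ⟨Finset.mem_univ i, h⟩) (fun hm => hA ⟨i, hm⟩)
  · -- an unsatisfiable degenerate constraint
    left
    push_neg at hz
    obtain ⟨i, hi0, hib⟩ := hz
    ext t
    simp only [solSet, Set.mem_setOf_eq, Set.mem_empty_iff_false, iff_false, not_forall]
    exact ⟨i, by rw [hi0]; push_neg; linarith⟩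

lemma solSet_nonempty_iff :
    (solSet α β).Nonempty ↔
      ((∀ i, α i = 0 → 0 ≤ β i) ∧
        ∀ i j, 0 < α i → α j < 0 → 0 ≤ α i * β j - α j * β i) := by
  classical
  constructor
  · rintro ⟨t, ht⟩
    constructor
    · intro i hi
      have := ht i
      rw [hi] at this
      linarith
    · intro i j hi hj
      have h1 : 0 ≤ (-(α j)) * (α i * t + β i) := mul_nonneg (by linarith) (ht i)
      have h2 : 0 ≤ α i * (α j * t + β j) := mul_nonneg (le_of_lt hi) (ht j)
      nlinarith [h1, h2]
  · rintro ⟨hz, hp⟩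
    set Apos := Finset.univ.filter (fun i => 0 < α i) with hApos
    set Bneg := Finset.univ.filter (fun i => α i < 0) with hBneg
    by_cases hA : Apos.Nonempty
    · set L := (Apos.image (fun i => -β i / α i)).max' (hA.image _) with hL
      refine ⟨L, fun i => ?_⟩
      rcases lt_trichotomy (α i) 0 with h | h | h
      · -- use a pair condition with the attaining index
        obtain ⟨y, hy, hyL⟩ := Finset.mem_image.mp
          ((Apos.image (fun i => -β i / α i)).max'_mem (hA.image _))
        have hypos : 0 < α y := (Finset.mem_filter.mp hy).2
        have hcond := hp y i hypos h
        have key : α i * (-β y / α y) + β i = (α y * β i - α i * β y) / α y := by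
          field_simp
          ring
        rw [hL, ← hyL, key]
        exact div_nonneg hcond (le_of_lt hypos)
      · rw [h]
        simpa using hz i h
      · have hmem : -β i / α i ∈ Apos.image (fun i => -β i / α i) :=
          Finset.mem_image.mpr ⟨i, Finset.mem_filter.mpr ⟨Finset.mem_univ i, h⟩, rfl⟩
        have := Finset.le_max' _ _ hmem
        rw [div_le_iff₀ h] at this
        linarith
    · by_cases hB : Bneg.Nonempty
      · set U := (Bneg.image (fun i => -β i / α i)).min' (hB.image _) with hU
        refine ⟨U, fun i => ?_⟩
        rcases lt_trichotomy (α i) 0 with h | h | h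
        · have hmem : -β i / α i ∈ Bneg.image (fun i => -β i / α i) :=
            Finset.mem_image.mpr ⟨i, Finset.mem_filter.mpr ⟨Finset.mem_univ i, h⟩, rfl⟩
          have := Finset.min'_le _ _ hmem
          rw [le_div_iff_of_neg h] at this
          linarith
        · rw [h]
          simpa using hz i h
        · exact absurd (Finset.mem_filter.mpr ⟨Finset.mem_univ i, h⟩) (fun hm => hA ⟨i, hm⟩)
      · refine ⟨0, fun i => ?_⟩
        rcases lt_trichotomy (α i) 0 with h | h | h
        · exact absurd (Finset.mem_filter.mpr ⟨Finset.mem_univ i, h⟩) (fun hm => hB ⟨i, hm⟩)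
        · rw [h]
          simpa using hz i h
        · exact absurd (Finset.mem_filter.mpr ⟨Finset.mem_univ i, h⟩) (fun hm => hA ⟨i, hm⟩)

end oneVar


lemma isPolyhedron_univ : IsPolyhedron (Set.univ : Set V) :=
  ⟨0, Fin.elim0, by ext v; simp⟩

lemma isPolyhedron_empty : IsPolyhedron (∅ : Set V) := by
  refine ⟨1, fun _ => AffineMap.const ℚ V (-1 : ℚ), ?_⟩
  ext v
  simp

lemma isPolyhedron_finite {ι : Type} [Fintype ι] (g : ι → (V →ᵃ[ℚ] ℚ)) :
    IsPolyhedron {v | ∀ i, 0 ≤ g i v} := by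
  refine ⟨Fintype.card ι, g ∘ (Fintype.equivFin ι).symm, ?_⟩
  ext v
  simp only [Set.mem_setOf_eq, Function.comp_apply]
  constructor
  · intro h j
    exact h _
  · intro h i
    have := h (Fintype.equivFin ι i)
    simpa using this

lemma isPolyhedron_inter {S T : Set V} (hS : IsPolyhedron S) (hT : IsPolyhedron T) :
    IsPolyhedron (S ∩ T) := by
  obtain ⟨m, f, rfl⟩ := hS
  obtain ⟨m', g, rfl⟩ := hT
  have : {v : V | ∀ i, 0 ≤ f i v} ∩ {v | ∀ i, 0 ≤ g i v}
      = {v | ∀ i : Fin m ⊕ Fin m', 0 ≤ Sum.elim f g i v} := by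
    ext v
    simp only [Set.mem_inter_iff, Set.mem_setOf_eq]
    constructor
    · rintro ⟨h1, h2⟩ (i | j)
      · exact h1 i
      · exact h2 j
    · intro h
      exact ⟨fun i => h (Sum.inl i), fun j => h (Sum.inr j)⟩
  rw [this]
  exact isPolyhedron_finite _

section snoc

/-- The linear embedding `x ↦ (x, 0)`. -/
def snoc0 (k : ℕ) : (Fin k → ℚ) →ₗ[ℚ] (Fin (k + 1) → ℚ) where
  toFun x := Fin.snoc x 0
  map_add' x y := by
    funext i
    refine Fin.lastCases ?_ (fun j => ?_) i <;> simp
  map_smul' c x := by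
    funext i
    refine Fin.lastCases ?_ (fun j => ?_) i <;> simp

/-- The last basis vector. -/
def elast (k : ℕ) : Fin (k + 1) → ℚ := Fin.snoc 0 1

lemma snoc_decomp (k : ℕ) (x : Fin k → ℚ) (t : ℚ) :
    Fin.snoc x t = t • elast k + (Fin.snoc x (0 : ℚ) : Fin (k + 1) → ℚ) := by
  funext i
  refine Fin.lastCases ?_ (fun j => ?_) i <;> simp [elast]

lemma affine_snoc (k : ℕ) (g : (Fin (k + 1) → ℚ) →ᵃ[ℚ] ℚ) (x : Fin k → ℚ) (t : ℚ) :
    g (Fin.snoc x t) = g.linear (elast k) * t + g (Fin.snoc x 0) := by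
  rw [snoc_decomp]
  have h := g.map_vadd (Fin.snoc x (0 : ℚ) : Fin (k + 1) → ℚ) (t • elast k)
  rw [vadd_eq_add] at h
  rw [h, g.linear.map_smul]
  rw [vadd_eq_add, smul_eq_mul]
  ring

end snoc

section fiber

variable {k m : ℕ} (f : Fin m → ((Fin (k + 1) → ℚ) →ᵃ[ℚ] ℚ))

/-- Coefficient of the last variable. -/
def acoef (i : Fin m) : ℚ := (f i).linear (elast k)

/-- The affine function of the remaining variables. -/
def bcoef (i : Fin m) : (Fin k → ℚ) →ᵃ[ℚ] ℚ := (f i).comp (snoc0 k).toAffineMap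

lemma mem_poly_snoc (x : Fin k → ℚ) (t : ℚ) :
    Fin.snoc x t ∈ {v : Fin (k + 1) → ℚ | ∀ i, 0 ≤ f i v} ↔
      ∀ i, 0 ≤ acoef f i * t + bcoef f i x := by
  simp only [Set.mem_setOf_eq, acoef, bcoef, AffineMap.comp_apply]
  constructor
  · intro h i
    have := h i
    rw [affine_snoc] at this
    exact this
  · intro h i
    rw [affine_snoc]
    exact h i

end fiber

section proj

variable {k m : ℕ}

open Classical in
/-- The Fourier–Motzkin functionals describing the projection of a polyhedron. -/
def projFun (f : Fin m → ((Fin (k + 1) → ℚ) →ᵃ[ℚ] ℚ)) :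
    (Fin m ⊕ Fin m × Fin m) → ((Fin k → ℚ) →ᵃ[ℚ] ℚ)
  | Sum.inl i => if acoef f i = 0 then bcoef f i else 0
  | Sum.inr (i, j) =>
      if 0 < acoef f i ∧ acoef f j < 0 then acoef f i • bcoef f j - acoef f j • bcoef f i else 0

/-- The projection of the polyhedron cut out by `f`. -/
def projSet (f : Fin m → ((Fin (k + 1) → ℚ) →ᵃ[ℚ] ℚ)) : Set (Fin k → ℚ) :=
  {x | ∀ i, 0 ≤ projFun f i x}

lemma isPolyhedron_projSet (f : Fin m → ((Fin (k + 1) → ℚ) →ᵃ[ℚ] ℚ)) :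
    IsPolyhedron (projSet f) :=
  isPolyhedron_finite (projFun f)

lemma mem_projSet_iff (f : Fin m → ((Fin (k + 1) → ℚ) →ᵃ[ℚ] ℚ)) (x : Fin k → ℚ) :
    x ∈ projSet f ↔ (solSet (acoef f) (fun i => bcoef f i x)).Nonempty := by
  classical
  rw [solSet_nonempty_iff]
  simp only [projSet, Set.mem_setOf_eq]
  constructor
  · intro h
    constructor
    · intro i hi
      have := h (Sum.inl i)
      rw [projFun, if_pos hi] at this
      exact this
    · intro i j hi hj
      have := h (Sum.inr (i, j))
      rw [projFun, if_pos ⟨hi, hj⟩] at this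
      simpa using this
  · rintro ⟨h1, h2⟩ (i | ⟨i, j⟩)
    · rw [projFun]
      by_cases hi : acoef f i = 0
      · rw [if_pos hi]
        exact h1 i hi
      · rw [if_neg hi]
        simp
    · rw [projFun]
      by_cases hij : 0 < acoef f i ∧ acoef f j < 0
      · rw [if_pos hij]
        simpa using h2 i j hij.1 hij.2
      · rw [if_neg hij]
        simp

lemma ind_congr {α β : Type*} {S : Set α} {S' : Set β} {x : α} {y : β}
    (h : x ∈ S ↔ y ∈ S') : ind S x = ind S' y := by
  by_cases hx : x ∈ S
  · rw [ind_of_mem hx, ind_of_mem (h.mp hx)]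
  · rw [ind_of_not_mem hx, ind_of_not_mem (fun hy => hx (h.mpr hy))]

/-- The key lemma: fibers of a polyhedron are tame and integrate to the
indicator of the (polyhedral) projection. -/
lemma key_fiber (f : Fin m → ((Fin (k + 1) → ℚ) →ᵃ[ℚ] ℚ)) (x : Fin k → ℚ) :
    Tame (fun t => ind {v : Fin (k + 1) → ℚ | ∀ i, 0 ≤ f i v} (Fin.snoc x t)) ∧
      T (fun t => ind {v : Fin (k + 1) → ℚ | ∀ i, 0 ≤ f i v} (Fin.snoc x t))
        = ind (projSet f) x := by
  classical
  have heq : (fun t => ind {v : Fin (k + 1) → ℚ | ∀ i, 0 ≤ f i v} (Fin.snoc x t))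
      = fun t => ind (solSet (acoef f) (fun i => bcoef f i x)) t := by
    funext t
    exact ind_congr (by rw [mem_poly_snoc]; rfl)
  rw [heq]
  obtain ⟨ht, hT⟩ := tame_T_interval (solSet_classify (acoef f) (fun i => bcoef f i x))
  refine ⟨ht, ?_⟩
  rw [hT]
  by_cases hne : (solSet (acoef f) (fun i => bcoef f i x)).Nonempty
  · rw [if_pos hne, ind_of_mem ((mem_projSet_iff f x).mpr hne)]
  · rw [if_neg hne, ind_of_not_mem (fun hx => hne ((mem_projSet_iff f x).mp hx))]

lemma nonempty_projSet (f : Fin m → ((Fin (k + 1) → ℚ) →ᵃ[ℚ] ℚ))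
    (h : {v : Fin (k + 1) → ℚ | ∀ i, 0 ≤ f i v}.Nonempty) : (projSet f).Nonempty := by
  obtain ⟨v, hv⟩ := h
  refine ⟨Fin.init v, (mem_projSet_iff f _).mpr ⟨v (Fin.last k), ?_⟩⟩
  have : Fin.snoc (Fin.init v) (v (Fin.last k)) = v := Fin.snoc_init_self v
  intro i
  have := (mem_poly_snoc f (Fin.init v) (v (Fin.last k))).mp (by rw [this]; exact hv) i
  exact this

end proj

section construct

/-- Functions that are `ℤ`-linear combinations of indicators of polyhedra. -/
def InM (k : ℕ) (F : (Fin k → ℚ) → ℤ) : Prop :=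
  ∃ (M : ℕ) (c : Fin M → ℤ) (P : Fin M → Set (Fin k → ℚ)),
    (∀ i, IsPolyhedron (P i)) ∧ ∀ v, F v = ∑ i, c i * ind (P i) v

lemma InM_congr {k : ℕ} {F G : (Fin k → ℚ) → ℤ} (h : ∀ v, F v = G v) (hG : InM k G) :
    InM k F := by
  obtain ⟨M, c, P, hP, hval⟩ := hG
  exact ⟨M, c, P, hP, fun v => (h v).trans (hval v)⟩

lemma InM_of_finite {k : ℕ} {ι : Type} [Fintype ι] (c : ι → ℤ) (P : ι → Set (Fin k → ℚ))
    (hP : ∀ i, IsPolyhedron (P i)) : InM k (fun v => ∑ i, c i * ind (P i) v) := by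
  refine ⟨Fintype.card ι, c ∘ (Fintype.equivFin ι).symm, P ∘ (Fintype.equivFin ι).symm,
    fun i => hP _, fun v => ?_⟩
  exact (Equiv.sum_comp (Fintype.equivFin ι).symm (fun i => c i * ind (P i) v)).symm

lemma InM_ind_poly {k : ℕ} {P : Set (Fin k → ℚ)} (h : IsPolyhedron P) : InM k (ind P) := by
  refine ⟨1, fun _ => 1, fun _ => P, fun _ => h, fun v => ?_⟩
  simp

lemma InM.add {k : ℕ} {F G : (Fin k → ℚ) → ℤ} (hF : InM k F) (hG : InM k G) :
    InM k (fun v => F v + G v) := by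
  obtain ⟨M, c, P, hP, hvF⟩ := hF
  obtain ⟨M', d, Q, hQ, hvG⟩ := hG
  apply InM_congr (G := fun v => ∑ i : Fin M ⊕ Fin M',
    Sum.elim c d i * ind (Sum.elim P Q i) v)
  · intro v
    rw [Fintype.sum_sum_type]
    simp only [Sum.elim_inl, Sum.elim_inr]
    rw [hvF v, hvG v]
  · exact InM_of_finite _ _ (by rintro (i | j); exacts [hP i, hQ j])

lemma InM.intmul {k : ℕ} {F : (Fin k → ℚ) → ℤ} (hF : InM k F) (d : ℤ) :
    InM k (fun v => d * F v) := by
  obtain ⟨M, c, P, hP, hvF⟩ := hF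
  refine ⟨M, fun i => d * c i, P, hP, fun v => ?_⟩
  show d * F v = _
  rw [hvF v, Finset.mul_sum]
  exact Finset.sum_congr rfl (fun i _ => by ring)

lemma ind_inter {α : Type*} (S T : Set α) (v : α) : ind (S ∩ T) v = ind S v * ind T v := by
  by_cases hS : v ∈ S <;> by_cases hT : v ∈ T <;>
    simp [ind_of_mem, ind_of_not_mem, hS, hT, Set.mem_inter_iff, ind]

lemma InM.mul {k : ℕ} {F G : (Fin k → ℚ) → ℤ} (hF : InM k F) (hG : InM k G) :
    InM k (fun v => F v * G v) := by
  obtain ⟨M, c, P, hP, hvF⟩ := hF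
  obtain ⟨M', d, Q, hQ, hvG⟩ := hG
  apply InM_congr (G := fun v => ∑ p : Fin M × Fin M',
    (c p.1 * d p.2) * ind (P p.1 ∩ Q p.2) v)
  · intro v
    rw [Fintype.sum_prod_type, hvF v, hvG v, Finset.sum_mul_sum]
    exact Finset.sum_congr rfl (fun i _ => Finset.sum_congr rfl (fun j _ => by
      rw [ind_inter]; ring))
  · exact InM_of_finite _ _ (fun p => isPolyhedron_inter (hP p.1) (hQ p.2))


lemma InM_ind_constructible {k : ℕ} {S : Set (Fin k → ℚ)} (h : IsConstructible S) :
    InM k (ind S) := by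
  induction h with
  | poly h => exact InM_ind_poly h
  | @compl A hA ih =>
      apply InM_congr (G := fun v => ind Set.univ v + (-1) * ind A v)
        (hG := (InM_ind_poly isPolyhedron_univ).add (ih.intmul (-1)))
      intro v
      show ind Aᶜ v = ind Set.univ v + (-1) * ind A v
      by_cases hv : v ∈ A
      · rw [ind_of_not_mem (by simp [hv] : v ∉ Aᶜ), ind_of_mem hv,
          ind_of_mem (Set.mem_univ v)]
        ring
      · rw [ind_of_mem (by simp [hv] : v ∈ Aᶜ), ind_of_not_mem hv,
          ind_of_mem (Set.mem_univ v)]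
        ring
  | @union A B hA hB ihA ihB =>
      apply InM_congr (G := fun v => (ind A v + ind B v) + (-1) * (ind A v * ind B v))
        (hG := (ihA.add ihB).add ((ihA.mul ihB).intmul (-1)))
      intro v
      show ind (A ∪ B) v = ind A v + ind B v + (-1) * (ind A v * ind B v)
      rw [← ind_inter]
      by_cases h1 : v ∈ A <;> by_cases h2 : v ∈ B
      · rw [ind_of_mem (Set.mem_union_left _ h1), ind_of_mem h1, ind_of_mem h2,
          ind_of_mem (Set.mem_inter h1 h2)]
        ring
      · rw [ind_of_mem (Set.mem_union_left _ h1), ind_of_mem h1, ind_of_not_mem h2,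
          ind_of_not_mem (fun hm => h2 hm.2)]
        ring
      · rw [ind_of_mem (Set.mem_union_right _ h2), ind_of_not_mem h1, ind_of_mem h2,
          ind_of_not_mem (fun hm => h1 hm.1)]
        ring
      · rw [ind_of_not_mem (fun hm => hm.elim h1 h2), ind_of_not_mem h1, ind_of_not_mem h2,
          ind_of_not_mem (fun hm => h1 hm.1)]
        ring

section integrate

/-- Integrating out the last coordinate. -/
def Phi {k : ℕ} (F : (Fin (k + 1) → ℚ) → ℤ) : (Fin k → ℚ) → ℤ :=
  fun x => T (fun t => F (Fin.snoc x t))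

/-- The iterated Euler integral. -/
def EChi : (k : ℕ) → ((Fin k → ℚ) → ℤ) → ℤ
  | 0, F => F (fun i => i.elim0)
  | (k + 1), F => EChi k (Phi F)
lemma tame_finsum {ι : Type*} (s : Finset ι) (g : ι → ℚ → ℤ) (h : ∀ i ∈ s, Tame (g i)) :
    Tame (fun t => ∑ i ∈ s, g i t) := by
  classical
  induction s using Finset.induction_on with
  | empty => simpa using tame_const 0
  | @insert a s ha ih =>
      have he : (fun t => ∑ i ∈ insert a s, g i t) = fun t => g a t + ∑ i ∈ s, g i t := by
        funext t
        rw [Finset.sum_insert ha]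
      rw [he]
      exact (h a (Finset.mem_insert_self a s)).add
        (ih fun i hi => h i (Finset.mem_insert_of_mem hi))

lemma T_finsum {ι : Type*} (s : Finset ι) (g : ι → ℚ → ℤ) (h : ∀ i ∈ s, Tame (g i)) :
    T (fun t => ∑ i ∈ s, g i t) = ∑ i ∈ s, T (g i) := by
  classical
  induction s using Finset.induction_on with
  | empty => simpa using T_const 0
  | @insert a s ha ih =>
      have he : (fun t => ∑ i ∈ insert a s, g i t) = fun t => g a t + ∑ i ∈ s, g i t := by
        funext t
        rw [Finset.sum_insert ha]
      rw [he, Finset.sum_insert ha,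
        T_add (h a (Finset.mem_insert_self a s))
          (tame_finsum s g fun i hi => h i (Finset.mem_insert_of_mem hi)),
        ih (fun i hi => h i (Finset.mem_insert_of_mem hi))]

/-- Projection of a polyhedron along the last coordinate, packaged. -/
lemma poly_proj {k : ℕ} {P : Set (Fin (k + 1) → ℚ)} (hP : IsPolyhedron P) :
    ∃ Q : Set (Fin k → ℚ), IsPolyhedron Q ∧ (P.Nonempty → Q.Nonempty) ∧
      ∀ x, Tame (fun t => ind P (Fin.snoc x t)) ∧
        T (fun t => ind P (Fin.snoc x t)) = ind Q x := by
  obtain ⟨m, f, rfl⟩ := hP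
  exact ⟨projSet f, isPolyhedron_projSet f, nonempty_projSet f, key_fiber f⟩

lemma InM_fiber_tame {k : ℕ} {F : (Fin (k + 1) → ℚ) → ℤ} (h : InM (k + 1) F)
    (x : Fin k → ℚ) : Tame (fun t => F (Fin.snoc x t)) := by
  obtain ⟨M, c, P, hP, hval⟩ := h
  have he : (fun t => F (Fin.snoc x t))
      = fun t => ∑ i : Fin M, c i * ind (P i) (Fin.snoc x t) := by
    funext t
    exact hval _
  rw [he]
  apply tame_finsum
  intro i _
  obtain ⟨Q, _, _, hQ⟩ := poly_proj (hP i)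
  exact ((hQ x).1).intmul (c i)

lemma Phi_add {k : ℕ} {F G : (Fin (k + 1) → ℚ) → ℤ} (hF : InM (k + 1) F)
    (hG : InM (k + 1) G) (x : Fin k → ℚ) :
    Phi (fun v => F v + G v) x = Phi F x + Phi G x :=
  T_add (InM_fiber_tame hF x) (InM_fiber_tame hG x)

lemma Phi_InM {k : ℕ} {F : (Fin (k + 1) → ℚ) → ℤ} (h : InM (k + 1) F) :
    InM k (Phi F) := by
  obtain ⟨M, c, P, hP, hval⟩ := h
  choose Q hQpoly hQne hQT using fun i => poly_proj (hP i)
  refine ⟨M, c, Q, hQpoly, fun x => ?_⟩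
  have he : (fun t => F (Fin.snoc x t))
      = fun t => ∑ i : Fin M, c i * ind (P i) (Fin.snoc x t) := by
    funext t
    exact hval _
  rw [Phi, he, T_finsum _ _ (fun i _ => ((hQT i x).1).intmul (c i))]
  refine Finset.sum_congr rfl (fun i _ => ?_)
  rw [T_intmul ((hQT i x).1) (c i), (hQT i x).2]

lemma EChi_add : ∀ (k : ℕ) (F G : (Fin k → ℚ) → ℤ), InM k F → InM k G →
    EChi k (fun v => F v + G v) = EChi k F + EChi k G := by
  intro k
  induction k with
  | zero => intro F G _ _; rfl
  | succ k ih =>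
      intro F G hF hG
      show EChi k (Phi fun v => F v + G v) = EChi k (Phi F) + EChi k (Phi G)
      have he : (Phi fun v => F v + G v) = fun x => Phi F x + Phi G x :=
        funext (Phi_add hF hG)
      rw [he]
      exact ih _ _ (Phi_InM hF) (Phi_InM hG)

lemma EChi_poly : ∀ (k : ℕ) (P : Set (Fin k → ℚ)), IsPolyhedron P → P.Nonempty →
    EChi k (ind P) = 1 := by
  intro k
  induction k with
  | zero =>
      intro P _ hne
      obtain ⟨v, hv⟩ := hne
      show ind P (fun i => i.elim0) = 1
      have : (fun i : Fin 0 => i.elim0 : Fin 0 → ℚ) = v := Subsingleton.elim _ _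
      rw [this]
      exact ind_of_mem hv
  | succ k ih =>
      intro P hP hne
      obtain ⟨Q, hQpoly, hQne, hQT⟩ := poly_proj hP
      show EChi k (Phi (ind P)) = 1
      have he : Phi (ind P) = ind Q := funext (fun x => (hQT x).2)
      rw [he]
      exact ih Q hQpoly (hQne hne)

lemma ind_union_disjoint {α : Type*} {A B : Set α} (h : Disjoint A B) (v : α) :
    ind (A ∪ B) v = ind A v + ind B v := by
  by_cases hA : v ∈ A
  · rw [ind_of_mem (Set.mem_union_left _ hA), ind_of_mem hA,
      ind_of_not_mem (Set.disjoint_left.mp h hA)]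
    ring
  · by_cases hB : v ∈ B
    · rw [ind_of_mem (Set.mem_union_right _ hB), ind_of_not_mem hA, ind_of_mem hB]
      ring
    · rw [ind_of_not_mem (fun hv => hv.elim hA hB), ind_of_not_mem hA, ind_of_not_mem hB]
      ring

/-- The Euler characteristic. -/
def eulerChar (n : ℕ) (S : Set (Fin n → ℚ)) : ℤ := EChi n (ind S)

lemma isEulerChar_eulerChar (n : ℕ) : IsEulerChar (eulerChar n) := by
  constructor
  · intro A B hA hB hd
    have he : ind (A ∪ B) = fun v => ind A v + ind B v := funext (ind_union_disjoint hd)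
    show EChi n (ind (A ∪ B)) = _
    rw [he]
    exact EChi_add n _ _ (InM_ind_constructible hA) (InM_ind_constructible hB)
  · intro S hS hne
    exact EChi_poly n S hS hne

end integrate

section uniqueness

/-- Union of a list of sets. -/
def UL (l : List (Set V)) : Set V := l.foldr (· ∪ ·) ∅

lemma mem_UL {l : List (Set V)} {v : V} : v ∈ UL l ↔ ∃ S ∈ l, v ∈ S := by
  induction l with
  | nil => simp [UL]
  | cons D l ih =>
      show v ∈ D ∪ UL l ↔ _
      rw [Set.mem_union, ih]
      constructor
      · rintro (h | ⟨S, hS, hv⟩)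
        · exact ⟨D, List.mem_cons_self, h⟩
        · exact ⟨S, List.mem_cons_of_mem _ hS, hv⟩
      · rintro ⟨S, hS, hv⟩
        rcases List.mem_cons.mp hS with rfl | hS
        · exact Or.inl hv
        · exact Or.inr ⟨S, hS, hv⟩

lemma UL_nil : UL ([] : List (Set V)) = ∅ := rfl

lemma UL_cons (D : Set V) (l : List (Set V)) : UL (D :: l) = D ∪ UL l := rfl

lemma IsConstructible.inter {S T : Set V} (hS : IsConstructible S) (hT : IsConstructible T) :
    IsConstructible (S ∩ T) := by
  have h : S ∩ T = (Sᶜ ∪ Tᶜ)ᶜ := by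
    rw [Set.compl_union, compl_compl, compl_compl]
  rw [h]
  exact .compl (.union (.compl hS) (.compl hT))

lemma constructible_UL {l : List (Set V)} (h : ∀ D ∈ l, IsConstructible D) :
    IsConstructible (UL l) := by
  induction l with
  | nil => exact .poly isPolyhedron_empty
  | cons D l ih =>
      rw [UL_cons]
      exact .union (h D (List.mem_cons_self))
        (ih fun E hE => h E (List.mem_cons_of_mem _ hE))

/-- A cell: a polyhedron minus a finite union of polyhedra. -/
def IsCell (S : Set V) : Prop :=
  ∃ (P : Set V) (l : List (Set V)), IsPolyhedron P ∧ (∀ N ∈ l, IsPolyhedron N) ∧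
    S = P \ UL l

lemma IsCell.constructible {S : Set V} (h : IsCell S) : IsConstructible S := by
  obtain ⟨P, l, hP, hl, rfl⟩ := h
  rw [Set.diff_eq]
  exact (IsConstructible.poly hP).inter
    (.compl (constructible_UL fun D hD => .poly (hl D hD)))

lemma UL_append (l l' : List (Set V)) : UL (l ++ l') = UL l ∪ UL l' := by
  ext v
  simp only [mem_UL, List.mem_append, Set.mem_union]
  constructor
  · rintro ⟨S, hS | hS, hv⟩
    · exact Or.inl ⟨S, hS, hv⟩
    · exact Or.inr ⟨S, hS, hv⟩
  · rintro (⟨S, hS, hv⟩ | ⟨S, hS, hv⟩)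
    · exact ⟨S, Or.inl hS, hv⟩
    · exact ⟨S, Or.inr hS, hv⟩

lemma IsCell.inter {S T : Set V} (hS : IsCell S) (hT : IsCell T) : IsCell (S ∩ T) := by
  obtain ⟨P, l, hP, hl, rfl⟩ := hS
  obtain ⟨P', l', hP', hl', rfl⟩ := hT
  refine ⟨P ∩ P', l ++ l', isPolyhedron_inter hP hP', ?_, ?_⟩
  · intro N hN
    rcases List.mem_append.mp hN with h | h
    · exact hl N h
    · exact hl' N h
  · rw [UL_append]
    ext v
    simp only [Set.mem_inter_iff, Set.mem_diff, Set.mem_union]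
    tauto

lemma eulerChar_empty {χ : Set V → ℤ} (h : IsEulerChar χ) : χ ∅ = 0 := by
  have hc : IsConstructible (∅ : Set V) := .poly isPolyhedron_empty
  have := h.1 ∅ ∅ hc hc (Set.disjoint_left.mpr fun _ hv => hv.elim)
  rw [Set.union_empty] at this
  linarith

lemma eulerChar_strong {χ : Set V → ℤ} (h : IsEulerChar χ) {A B : Set V}
    (hA : IsConstructible A) (hB : IsConstructible B) :
    χ (A ∪ B) + χ (A ∩ B) = χ A + χ B := by
  have hBA : IsConstructible (B ∩ Aᶜ) := hB.inter (.compl hA)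
  have hset1 : A ∪ (B ∩ Aᶜ) = A ∪ B := by
    ext v
    simp only [Set.mem_union, Set.mem_inter_iff, Set.mem_compl_iff]
    tauto
  have h1 := h.1 A (B ∩ Aᶜ) hA hBA
    (Set.disjoint_left.mpr fun v hv hv2 => hv2.2 hv)
  rw [hset1] at h1
  have hset2 : (A ∩ B) ∪ (B ∩ Aᶜ) = B := by
    ext v
    simp only [Set.mem_union, Set.mem_inter_iff, Set.mem_compl_iff]
    tauto
  have h2 := h.1 (A ∩ B) (B ∩ Aᶜ) (hA.inter hB) hBA
    (Set.disjoint_left.mpr fun v hv hv2 => hv2.2 hv.1)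
  rw [hset2] at h2
  linarith

lemma cell_agree {χ₁ χ₂ : Set V → ℤ} (h1 : IsEulerChar χ₁) (h2 : IsEulerChar χ₂) :
    ∀ (l : List (Set V)) (P : Set V), IsPolyhedron P → (∀ N ∈ l, IsPolyhedron N) →
      χ₁ (P \ UL l) = χ₂ (P \ UL l) := by
  intro l
  induction l with
  | nil =>
      intro P hP _
      rw [UL_nil, Set.diff_empty]
      by_cases hne : P.Nonempty
      · rw [h1.2 P hP hne, h2.2 P hP hne]
      · rw [Set.not_nonempty_iff_eq_empty.mp hne, eulerChar_empty h1, eulerChar_empty h2]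
  | cons N l ih =>
      intro P hP hN
      have hNl : ∀ M ∈ l, IsPolyhedron M := fun M hM => hN M (List.mem_cons_of_mem _ hM)
      have hNp : IsPolyhedron N := hN N (List.mem_cons_self)
      have hsetD : (P \ UL (N :: l)) ∪ ((P ∩ N) \ UL l) = P \ UL l := by
        rw [UL_cons]
        ext v
        simp only [Set.mem_union, Set.mem_diff, Set.mem_inter_iff]
        tauto
      have hdisj : Disjoint (P \ UL (N :: l)) ((P ∩ N) \ UL l) := by
        rw [Set.disjoint_left]
        rintro v hv hv2
        exact (show v ∉ UL (N :: l) from hv.2) (by rw [UL_cons]; exact Or.inl hv2.1.2)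
      have hc1 : IsConstructible (P \ UL (N :: l)) :=
        IsCell.constructible ⟨P, N :: l, hP, hN, rfl⟩
      have hc2 : IsConstructible ((P ∩ N) \ UL l) :=
        IsCell.constructible ⟨P ∩ N, l, isPolyhedron_inter hP hNp, hNl, rfl⟩
      have hval1 := h1.1 _ _ hc1 hc2 hdisj
      have hval2 := h2.1 _ _ hc1 hc2 hdisj
      rw [hsetD] at hval1 hval2
      have e1 := ih P hP hNl
      have e2 := ih (P ∩ N) (isPolyhedron_inter hP hNp) hNl
      linarith

lemma CU_agree {χ₁ χ₂ : Set V → ℤ} (h1 : IsEulerChar χ₁) (h2 : IsEulerChar χ₂) :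
    ∀ (n : ℕ) (l : List (Set V)), l.length = n → (∀ D ∈ l, IsCell D) →
      χ₁ (UL l) = χ₂ (UL l) := by
  intro n
  induction n using Nat.strong_induction_on with
  | _ n ih =>
      intro l hlen hcell
      match l with
      | [] =>
          rw [UL_nil, eulerChar_empty h1, eulerChar_empty h2]
      | D :: l =>
          have hD : IsCell D := hcell D (List.mem_cons_self)
          have hl : ∀ E ∈ l, IsCell E := fun E hE => hcell E (List.mem_cons_of_mem _ hE)
          have hlc : IsConstructible (UL l) :=
            constructible_UL fun E hE => (hl E hE).constructible
          have hint : D ∩ UL l = UL (l.map (fun X => D ∩ X)) := by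
            ext v
            simp only [Set.mem_inter_iff, mem_UL, List.mem_map]
            constructor
            · rintro ⟨hvD, S, hS, hvS⟩
              exact ⟨D ∩ S, ⟨S, hS, rfl⟩, hvD, hvS⟩
            · rintro ⟨S', ⟨S, hS, rfl⟩, hvD, hvS⟩
              exact ⟨hvD, S, hS, hvS⟩
          have hs1 := eulerChar_strong h1 hD.constructible hlc
          have hs2 := eulerChar_strong h2 hD.constructible hlc
          have hlen' : l.length < n := by
            rw [← hlen]
            simp [List.length_cons]
          have eD : χ₁ D = χ₂ D := by
            obtain ⟨P, lN, hP, hlN, rfl⟩ := hD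
            exact cell_agree h1 h2 lN P hP hlN
          have eUL : χ₁ (UL l) = χ₂ (UL l) := ih l.length hlen' l rfl hl
          have eInt : χ₁ (D ∩ UL l) = χ₂ (D ∩ UL l) := by
            rw [hint]
            refine ih (l.map (fun X => D ∩ X)).length (by simpa using hlen') _ rfl ?_
            intro E hE
            obtain ⟨S, hS, rfl⟩ := List.mem_map.mp hE
            exact hD.inter (hl S hS)
          rw [UL_cons]
          linarith

lemma isPolyhedron_single (g : V →ᵃ[ℚ] ℚ) : IsPolyhedron {v : V | 0 ≤ g v} := by
  refine ⟨1, fun _ => g, ?_⟩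
  ext v
  simp

lemma isCU_poly {P : Set V} (hP : IsPolyhedron P) :
    ∃ l : List (Set V), (∀ D ∈ l, IsCell D) ∧ P = UL l := by
  refine ⟨[P], ?_, ?_⟩
  · intro D hD
    rcases List.mem_cons.mp hD with rfl | h
    · exact ⟨D, [], hP, by simp, by rw [UL_nil, Set.diff_empty]⟩
    · simp at h
  · rw [UL_cons, UL_nil, Set.union_empty]

lemma isCU_inter {S T : Set V}
    (hS : ∃ l : List (Set V), (∀ D ∈ l, IsCell D) ∧ S = UL l)
    (hT : ∃ l : List (Set V), (∀ D ∈ l, IsCell D) ∧ T = UL l) :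
    ∃ l : List (Set V), (∀ D ∈ l, IsCell D) ∧ S ∩ T = UL l := by
  obtain ⟨l, hl, rfl⟩ := hS
  obtain ⟨l', hl', rfl⟩ := hT
  refine ⟨l.flatMap (fun D => l'.map (fun E => D ∩ E)), ?_, ?_⟩
  · intro D hD
    rw [List.mem_flatMap] at hD
    obtain ⟨A, hA, hD⟩ := hD
    obtain ⟨B, hB, rfl⟩ := List.mem_map.mp hD
    exact (hl A hA).inter (hl' B hB)
  · ext v
    simp only [Set.mem_inter_iff, mem_UL, List.mem_flatMap, List.mem_map]
    constructor
    · rintro ⟨⟨A, hA, hvA⟩, ⟨B, hB, hvB⟩⟩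
      exact ⟨A ∩ B, ⟨A, hA, B, hB, rfl⟩, hvA, hvB⟩
    · rintro ⟨X, ⟨A, hA, B, hB, rfl⟩, hvA, hvB⟩
      exact ⟨⟨A, hA, hvA⟩, ⟨B, hB, hvB⟩⟩

lemma isCU_compl_poly {P : Set V} (hP : IsPolyhedron P) :
    ∃ l : List (Set V), (∀ D ∈ l, IsCell D) ∧ Pᶜ = UL l := by
  obtain ⟨m, f, rfl⟩ := hP
  refine ⟨List.ofFn (fun i : Fin m => {v : V | 0 ≤ (-(f i)) v} \ UL [{v : V | 0 ≤ f i v}]),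
    ?_, ?_⟩
  · intro D hD
    obtain ⟨i, rfl⟩ := List.mem_ofFn.mp hD
    exact ⟨{v : V | 0 ≤ (-(f i)) v}, [{v : V | 0 ≤ f i v}], isPolyhedron_single _,
      by
        intro N hN
        rcases List.mem_cons.mp hN with rfl | h
        · exact isPolyhedron_single _
        · simp at h, rfl⟩
  · ext v
    simp only [Set.mem_compl_iff, Set.mem_setOf_eq, mem_UL, List.mem_ofFn, not_forall]
    constructor
    · rintro ⟨i, hi⟩
      refine ⟨_, ⟨i, rfl⟩, ?_⟩
      have : ¬ 0 ≤ f i v := hi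
      constructor
      · show 0 ≤ (-(f i)) v
        rw [AffineMap.coe_neg, Pi.neg_apply]
        linarith [lt_of_not_ge this]
      · rw [UL_cons, UL_nil, Set.union_empty]
        exact this
    · rintro ⟨S, ⟨i, rfl⟩, hv⟩
      refine ⟨i, ?_⟩
      have := hv.2
      rw [UL_cons, UL_nil, Set.union_empty] at this
      exact this

lemma isCU_compl {S : Set V}
    (hS : ∃ l : List (Set V), (∀ D ∈ l, IsCell D) ∧ S = UL l) :
    ∃ l : List (Set V), (∀ D ∈ l, IsCell D) ∧ Sᶜ = UL l := by
  obtain ⟨l, hl, rfl⟩ := hS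
  induction l with
  | nil =>
      refine ⟨[Set.univ], ?_, ?_⟩
      · intro D hD
        rcases List.mem_cons.mp hD with rfl | h
        · exact ⟨Set.univ, [], isPolyhedron_univ, by simp, by rw [UL_nil, Set.diff_empty]⟩
        · simp at h
      · rw [UL_nil, Set.compl_empty, UL_cons, UL_nil, Set.union_empty]
  | cons D l ih =>
      have hD : IsCell D := hl D (List.mem_cons_self)
      have hl' : ∀ E ∈ l, IsCell E := fun E hE => hl E (List.mem_cons_of_mem _ hE)
      have hcomplD : ∃ l : List (Set V), (∀ E ∈ l, IsCell E) ∧ Dᶜ = UL l := by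
        obtain ⟨P, lN, hP, hlN, rfl⟩ := hD
        have hset : (P \ UL lN)ᶜ = Pᶜ ∪ UL lN := by
          ext v
          simp only [Set.mem_compl_iff, Set.mem_diff, Set.mem_union]
          tauto
        obtain ⟨lP, hlP, hPeq⟩ := isCU_compl_poly hP
        refine ⟨lP ++ lN.map (fun N => N \ UL []), ?_, ?_⟩
        · intro E hE
          rcases List.mem_append.mp hE with h | h
          · exact hlP E h
          · obtain ⟨N, hN, rfl⟩ := List.mem_map.mp h
            exact ⟨N, [], hlN N hN, by simp, rfl⟩
        · rw [hset, UL_append, hPeq]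
          congr 1
          ext v
          simp only [mem_UL, List.mem_map]
          constructor
          · rintro ⟨S, hS, hv⟩
            exact ⟨S \ UL [], ⟨S, hS, rfl⟩, by rw [UL_nil, Set.diff_empty]; exact hv⟩
          · rintro ⟨X, ⟨S, hS, rfl⟩, hv⟩
            rw [UL_nil, Set.diff_empty] at hv
            exact ⟨S, hS, hv⟩
      have hcomplUL := ih hl'
      rw [UL_cons, Set.compl_union]
      exact isCU_inter hcomplD hcomplUL

lemma constructible_isCU {S : Set V} (h : IsConstructible S) :
    ∃ l : List (Set V), (∀ D ∈ l, IsCell D) ∧ S = UL l := by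
  induction h with
  | poly h => exact isCU_poly h
  | compl _ ih => exact isCU_compl ih
  | union _ _ ihS ihT =>
      obtain ⟨l, hl, rfl⟩ := ihS
      obtain ⟨l', hl', rfl⟩ := ihT
      refine ⟨l ++ l', ?_, (UL_append l l').symm⟩
      intro D hD
      rcases List.mem_append.mp hD with h | h
      · exact hl D h
      · exact hl' D h

/-- Uniqueness: any two Euler characteristics agree on constructible sets. -/
lemma eulerChar_unique {χ₁ χ₂ : Set V → ℤ} (h1 : IsEulerChar χ₁) (h2 : IsEulerChar χ₂)
    {S : Set V} (hS : IsConstructible S) : χ₁ S = χ₂ S := by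
  obtain ⟨l, hl, rfl⟩ := constructible_isCU hS
  exact CU_agree h1 h2 l.length l rfl hl

end uniqueness

/-- There is a unique additive `ℤ`-valued invariant on the Boolean algebra
generated by rational polyhedra in `ℚ^n` assigning `1` to every non-empty
polyhedron. -/
theorem stmt3 (n : ℕ) :
    ∃ χ : Set (Fin n → ℚ) → ℤ, IsEulerChar χ ∧
      ∀ χ' : Set (Fin n → ℚ) → ℤ, IsEulerChar χ' →
        ∀ S : Set (Fin n → ℚ), IsConstructible S → χ' S = χ S := by
  refine ⟨eulerChar n, isEulerChar_eulerChar n, ?_⟩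
  intro χ' hχ' S hS
  exact eulerChar_unique hχ' (isEulerChar_eulerChar n) hS
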